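/- Let $R$ be a commutative ring and let $F$ be a set-valued functor on commutative $R$-algebras that commutes with filtered colimits and with finite products, and which is pointed (has a distinguished element $0$ in each value). If $F(S) = \{0\}$ for the coordinate ring $S$ of each connected component of $\operatorname{Spec}(R)$, then $F(R) = \{0\}$. -/

import Mathlib

/-!
Statement 17: Let `R` be a commutative ring and let `F` be a pointed-set-valued functor on
commutative `R`-algebras that commutes with filtered colimits and with finite products.
If `F(S) = {0}` for the coordinate ring `S` of each connected component of `Spec R`,
then `F(R) = {0}`.
-/

universe u

open CategoryTheory

/-- The ideal cutting out the connected component of `p` in `Spec R`: it is generated by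
the idempotents of `R` vanishing at every point of the connected component of `p`.  The
coordinate ring of the connected component of `p` is `R ⧸ componentIdeal R p`. -/
def componentIdeal (R : Type u) [CommRing R] (p : PrimeSpectrum R) : Ideal R :=
  Ideal.span {e : R | IsIdempotentElem e ∧
    ∀ q ∈ connectedComponent p, e ∈ PrimeSpectrum.asIdeal q}

namespace Statement17

open CategoryTheory.Limits

variable {R : Type u} [CommRing R]

theorem under_hom_ext {A B : Under (CommRingCat.of R)}
    (h : Function.Surjective A.hom) (f g : A ⟶ B) : f = g := by
  apply Under.UnderMorphism.ext
  have hf := Under.w f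
  have hg := Under.w g
  apply CommRingCat.hom_ext
  apply RingHom.ext
  intro x
  obtain ⟨y, rfl⟩ := h x
  calc f.right (A.hom y) = (A.hom ≫ f.right) y := rfl
  _ = (A.hom ≫ g.right) y := by rw [hf, hg]
  _ = g.right (A.hom y) := rfl

/-- The quotient of `R` by the ideal generated by `e`, as an object of `Under R`. -/
def toQuot (e : R) : Under (CommRingCat.of R) :=
  Under.mk (CommRingCat.ofHom (Ideal.Quotient.mk (Ideal.span {e})))

theorem toQuot_surj (e : R) : Function.Surjective (toQuot e).hom :=
  Ideal.Quotient.mk_surjective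

/-- The canonical morphism out of `Under.mk (𝟙 _)`. -/
def fromR0 (A : Under (CommRingCat.of R)) : Under.mk (𝟙 (CommRingCat.of R)) ⟶ A :=
  Under.homMk A.hom (Category.id_comp _)

theorem fromR0_eq {A : Under (CommRingCat.of R)} (f : Under.mk (𝟙 (CommRingCat.of R)) ⟶ A) :
    f = fromR0 A :=
  under_hom_ext (by intro x; exact ⟨x, rfl⟩) _ _

/-- The directed set of idempotents vanishing on the connected component of `p`. -/
def IdemVan (p : PrimeSpectrum R) : Type u :=
  {e : R // IsIdempotentElem e ∧ ∀ q ∈ connectedComponent p, e ∈ PrimeSpectrum.asIdeal q}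

namespace IdemVan

variable {p : PrimeSpectrum R}

instance : Preorder (IdemVan p) where
  le e f := e.1 * f.1 = e.1
  le_refl e := e.2.1
  le_trans e f g hef hfg := by
    change e.1 * f.1 = e.1 at hef
    change f.1 * g.1 = f.1 at hfg
    change e.1 * g.1 = e.1
    rw [← hef, mul_assoc, hfg]

theorem le_def {e f : IdemVan p} : e ≤ f ↔ e.1 * f.1 = e.1 := Iff.rfl

instance : Nonempty (IdemVan p) :=
  ⟨⟨0, by simp [IsIdempotentElem], fun q _ => (q.asIdeal).zero_mem⟩⟩

instance : IsDirected (IdemVan p) (· ≤ ·) := by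
  constructor
  rintro ⟨e, he, hev⟩ ⟨f, hf, hfv⟩
  refine ⟨⟨e + f - e * f, ?_, fun q hq => ?_⟩, ?_, ?_⟩
  · exact he.add_sub_mul hf
  · exact sub_mem (add_mem (hev q hq) (hfv q hq)) (Ideal.mul_mem_left _ _ (hfv q hq))
  · show e * (e + f - e * f) = e
    rw [mul_sub, mul_add, ← mul_assoc, he.eq]
    ring
  · show f * (e + f - e * f) = f
    rw [mul_sub, mul_add, show f * (e * f) = f * f * e by ring, hf.eq]
    ring

end IdemVan


namespace IdemVan

variable {p : PrimeSpectrum R}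

theorem span_le_of_le {e f : IdemVan p} (h : e ≤ f) :
    Ideal.span {e.1} ≤ Ideal.span {f.1} := by
  rw [Ideal.span_le]
  rintro x rfl
  exact Ideal.mem_span_singleton.2 ⟨e.1, by rw [mul_comm]; exact h.symm⟩

theorem span_le_componentIdeal (e : IdemVan p) :
    Ideal.span {e.1} ≤ componentIdeal R p := by
  rw [Ideal.span_le]
  rintro x rfl
  exact Ideal.subset_span ⟨e.2.1, e.2.2⟩

end IdemVan

variable (p : PrimeSpectrum R)

/-- The filtered diagram of quotients by idempotents vanishing on the component of `p`. -/
def diag : IdemVan p ⥤ Under (CommRingCat.of R) where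
  obj e := toQuot e.1
  map {e f} h :=
    Under.homMk (CommRingCat.ofHom (Ideal.Quotient.factor (IdemVan.span_le_of_le (leOfHom h))))
      (by apply CommRingCat.hom_ext; apply RingHom.ext; intro x; rfl)
  map_id _ := under_hom_ext (toQuot_surj _) _ _
  map_comp _ _ := under_hom_ext (toQuot_surj _) _ _

/-- The cocone over `diag p` with apex the coordinate ring of the component of `p`. -/
def compCocone : Cocone (diag p) where
  pt := Under.mk (CommRingCat.ofHom (Ideal.Quotient.mk (componentIdeal R p)))
  ι :=
    { app := fun e =>
        Under.homMk
          (CommRingCat.ofHom (Ideal.Quotient.factor (IdemVan.span_le_componentIdeal e)))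
          (by apply CommRingCat.hom_ext; apply RingHom.ext; intro x; rfl)
      naturality := fun _ _ _ => under_hom_ext (toQuot_surj _) _ _ }

theorem compCocone_hom_surj : Function.Surjective (compCocone p).pt.hom :=
  Ideal.Quotient.mk_surjective

/-- The cocone `compCocone p` is a colimit cocone. -/
def compIsColimit : IsColimit (compCocone p) where
  desc s :=
    Under.homMk
      (CommRingCat.ofHom (Ideal.Quotient.lift (componentIdeal R p) s.pt.hom.hom (by
        intro a ha
        refine Submodule.span_induction ?_ ?_ ?_ ?_ ha
        · rintro e ⟨he, hev⟩
          have hw := Under.w (s.ι.app ⟨e, he, hev⟩)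
          have hz : (Ideal.Quotient.mk (Ideal.span {e})) e = 0 :=
            Ideal.Quotient.eq_zero_iff_mem.2 (Ideal.subset_span rfl)
          calc s.pt.hom e
              = (((diag p).obj ⟨e, he, hev⟩).hom ≫ (s.ι.app ⟨e, he, hev⟩).right) e :=
                (congrArg (fun f => CommRingCat.Hom.hom f e) hw).symm
            _ = (s.ι.app ⟨e, he, hev⟩).right ((Ideal.Quotient.mk (Ideal.span {e})) e) := rfl
            _ = (s.ι.app ⟨e, he, hev⟩).right 0 := by rw [hz]; rfl
            _ = 0 := map_zero _
        · simp
        · intro x y _ _ hx hy; rw [map_add, hx, hy, add_zero]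
        · intro r x _ hx
          rw [smul_eq_mul, map_mul, hx, mul_zero])))
      (by apply CommRingCat.hom_ext; apply RingHom.ext; intro x; rfl)
  fac s e := under_hom_ext (toQuot_surj _) _ _
  uniq s m _ := under_hom_ext (compCocone_hom_surj p) _ _

section Pointed

/-- In a filtered colimit of pointed sets, two elements of a stage with equal images in the
colimit become equal at some later stage. -/
theorem pointed_filtered_stage {J : Type u} [SmallCategory J] [IsFiltered J]
    (K : J ⥤ Pointed.{u}) {c : Cocone K} (hc : IsColimit c) {j : J}
    (a b : (K.obj j).X) (h : (c.ι.app j).toFun a = (c.ι.app j).toFun b) :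
    ∃ (k : J) (f : j ⟶ k), (K.map f).toFun a = (K.map f).toFun b := by
  classical
  let K' : J ⥤ Type u := K ⋙ forget Pointed
  obtain ⟨j₀⟩ := IsFiltered.nonempty (C := J)
  have key : ∀ i : J, colimit.ι K' i (K.obj i).point = colimit.ι K' j₀ (K.obj j₀).point := by
    intro i
    have h1 : colimit.ι K' i (K.obj i).point
        = colimit.ι K' (IsFiltered.max j₀ i) (K'.map (IsFiltered.rightToMax j₀ i)
            (K.obj i).point) := (colimit.w_apply K' (IsFiltered.rightToMax j₀ i) _).symm
    have h2 : colimit.ι K' j₀ (K.obj j₀).point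
        = colimit.ι K' (IsFiltered.max j₀ i) (K'.map (IsFiltered.leftToMax j₀ i)
            (K.obj j₀).point) := (colimit.w_apply K' (IsFiltered.leftToMax j₀ i) _).symm
    rw [h1, h2]
    exact congrArg (colimit.ι K' (IsFiltered.max j₀ i))
      (((K.map (IsFiltered.rightToMax j₀ i)).map_point).trans
        ((K.map (IsFiltered.leftToMax j₀ i)).map_point).symm)
  let Q : Cocone K :=
    { pt := ⟨colimit K', colimit.ι K' j₀ (K.obj j₀).point⟩
      ι :=
        { app := fun i => ⟨colimit.ι K' i, key i⟩
          naturality := fun i i' f => by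
            apply Pointed.Hom.ext
            funext z
            exact colimit.w_apply K' f z } }
  have hfac := hc.fac Q j
  have ha : colimit.ι K' j a = colimit.ι K' j b := by
    have h1 : (c.ι.app j ≫ hc.desc Q).toFun a = (c.ι.app j ≫ hc.desc Q).toFun b := by
      rw [Pointed.Hom.comp_toFun']
      simp only [Function.comp_apply, h]
    rw [hfac] at h1
    exact h1
  rw [Types.FilteredColimit.colimit_eq_iff] at ha
  obtain ⟨k, f, g, hfg⟩ := ha
  refine ⟨IsFiltered.coeq f g, f ≫ IsFiltered.coeqHom f g, ?_⟩
  have h1 : (K.map (f ≫ IsFiltered.coeqHom f g)).toFun a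
      = K'.map (IsFiltered.coeqHom f g) (K'.map f a) := by
    rw [K.map_comp]; rfl
  have h2 : (K.map (f ≫ IsFiltered.coeqHom f g)).toFun b
      = K'.map (IsFiltered.coeqHom f g) (K'.map g b) := by
    rw [IsFiltered.coeq_condition f g, K.map_comp]; rfl
  rw [h1, h2, hfg]

/-- In a finite product of pointed sets, the projections are jointly injective. -/
theorem pointed_prod_inj {n : ℕ} (K : Discrete (Fin n) ⥤ Pointed.{u}) {c : Cone K}
    (hc : IsLimit c) (u v : c.pt.X)
    (h : ∀ i : Fin n, (c.π.app ⟨i⟩).toFun u = (c.π.app ⟨i⟩).toFun v) : u = v := by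
  let P : Cone K :=
    { pt := ⟨∀ i : Fin n, (K.obj ⟨i⟩).X, fun i => (K.obj ⟨i⟩).point⟩
      π := Discrete.natTrans fun i => ⟨fun x => x i.as, rfl⟩ }
  let hP : IsLimit P :=
    { lift := fun s =>
        ⟨fun x i => (s.π.app ⟨i⟩).toFun x, funext fun i => (s.π.app ⟨i⟩).map_point⟩
      fac := fun s i => Pointed.Hom.ext rfl
      uniq := fun s m hm => by
        apply Pointed.Hom.ext
        funext x i
        exact congrFun (congrArg Pointed.Hom.toFun (hm ⟨i⟩)) x }
  let e := hc.conePointUniqueUpToIso hP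
  have hinj : Function.Injective e.hom.toFun := by
    intro z w hzw
    have := congrFun (congrArg Pointed.Hom.toFun e.hom_inv_id) z
    have h2 := congrFun (congrArg Pointed.Hom.toFun e.hom_inv_id) w
    simp only [Pointed.Hom.comp_toFun', Function.comp_apply, Pointed.Hom.id_toFun', id_eq] at this h2
    rw [← this, ← h2, hzw]
  apply hinj
  funext i
  have he : ∀ z, e.hom.toFun z i = (c.π.app ⟨i⟩).toFun z := by
    intro z
    have := hc.conePointUniqueUpToIso_hom_comp hP ⟨i⟩
    exact (congrFun (congrArg Pointed.Hom.toFun this) z)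
  rw [he, he, h i]

end Pointed

section RingLemmas

/-- The partition datum associated to a list of elements: pairs `(e_i, c_i)` where
`c_i = e_1 ⋯ e_{i-1} (1 - e_i)`. -/
def pairs : List R → List (R × R)
  | [] => []
  | e :: l => (e, 1 - e) :: (pairs l).map fun ac => (ac.1, e * ac.2)

theorem pairs_fst_mem : ∀ (l : List R), ∀ ac ∈ pairs l, ac.1 ∈ l
  | [], ac, h => by simp [pairs] at h
  | e :: l, ac, h => by
    rcases List.mem_cons.1 h with h | h
    · subst h; exact List.mem_cons_self
    · obtain ⟨bc, hbc, rfl⟩ := List.mem_map.1 h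
      exact List.mem_cons_of_mem _ (pairs_fst_mem l bc hbc)

theorem pairs_sum_snd : ∀ l : List R, ((pairs l).map Prod.snd).sum = 1 - l.prod
  | [] => by simp [pairs]
  | e :: l => by
    rw [pairs, List.map_cons, List.sum_cons, List.map_map]
    have : (Prod.snd ∘ fun ac : R × R => (ac.1, e * ac.2)) = fun ac : R × R => e * ac.2 := rfl
    rw [this]
    have h2 : ((pairs l).map fun ac : R × R => e * ac.2).sum
        = e * ((pairs l).map Prod.snd).sum := by
      rw [← List.sum_map_mul_left]
    rw [h2, pairs_sum_snd l, List.prod_cons]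
    ring

theorem pairs_mul_eq_zero : ∀ l : List R, (∀ e ∈ l, IsIdempotentElem e) →
    ∀ ac ∈ pairs l, ac.1 * ac.2 = 0
  | [], _, ac, h => by simp [pairs] at h
  | e :: l, hl, ac, h => by
    rcases List.mem_cons.1 h with h | h
    · subst h
      have he := hl e (List.mem_cons_self)
      simp only
      rw [mul_sub, mul_one, he.eq, sub_self]
    · obtain ⟨bc, hbc, rfl⟩ := List.mem_map.1 h
      have := pairs_mul_eq_zero l (fun x hx => hl x (List.mem_cons_of_mem _ hx)) bc hbc
      simp only
      rw [show bc.1 * (e * bc.2) = e * (bc.1 * bc.2) by ring, this, mul_zero]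

theorem pairs_snd_idem : ∀ l : List R, (∀ e ∈ l, IsIdempotentElem e) →
    ∀ ac ∈ pairs l, IsIdempotentElem ac.2
  | [], _, ac, h => by simp [pairs] at h
  | e :: l, hl, ac, h => by
    rcases List.mem_cons.1 h with h | h
    · subst h
      exact (hl e (List.mem_cons_self)).one_sub
    · obtain ⟨bc, hbc, rfl⟩ := List.mem_map.1 h
      have h1 := pairs_snd_idem l (fun x hx => hl x (List.mem_cons_of_mem _ hx)) bc hbc
      have he := hl e (List.mem_cons_self)
      exact he.mul_of_commute (mul_comm _ _) h1

theorem pairs_orth : ∀ l : List R, (∀ e ∈ l, IsIdempotentElem e) →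
    List.Pairwise (fun x y : R × R => x.2 * y.2 = 0) (pairs l)
  | [], _ => List.Pairwise.nil
  | e :: l, hl => by
    have he := hl e (List.mem_cons_self)
    have ih := pairs_orth l fun x hx => hl x (List.mem_cons_of_mem _ hx)
    rw [pairs, List.pairwise_cons]
    constructor
    · rintro ⟨a, c⟩ h
      obtain ⟨bc, hbc, heq⟩ := List.mem_map.1 h
      have : c = e * bc.2 := (congrArg Prod.snd heq).symm
      rw [this, show (1 - e) * (e * bc.2) = (e - e * e) * bc.2 by ring, he.eq, sub_self, zero_mul]
    · rw [List.pairwise_map]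
      refine ih.imp ?_
      rintro ⟨a, c⟩ ⟨b, d⟩ hcd
      simp only
      rw [show e * c * (e * d) = e * e * (c * d) by ring, hcd, mul_zero]

theorem prod_idem : ∀ l : List R, (∀ e ∈ l, IsIdempotentElem e) → IsIdempotentElem l.prod
  | [], _ => by simp [IsIdempotentElem]
  | e :: l, hl => by
    have he := hl e (List.mem_cons_self)
    have ih := prod_idem l fun x hx => hl x (List.mem_cons_of_mem _ hx)
    rw [List.prod_cons]
    exact he.mul_of_commute (mul_comm _ _) ih

theorem idem_eq_zero_of_nilpotent {e : R} (he : IsIdempotentElem e) (hn : IsNilpotent e) :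
    e = 0 := by
  obtain ⟨n, hn⟩ := hn
  cases n with
  | zero =>
    rw [pow_zero] at hn
    calc e = e * 1 := (mul_one e).symm
    _ = e * 0 := by rw [hn]
    _ = 0 := mul_zero e
  | succ n =>
    rw [← he.pow_succ_eq n, hn]

theorem phi_bijective {N : ℕ} (cc : Fin N → R) (hid : ∀ i, IsIdempotentElem (cc i))
    (horth : ∀ i j, i ≠ j → cc i * cc j = 0) (hsum : ∑ i, cc i = 1) :
    Function.Bijective
      (Pi.ringHom fun i : Fin N => Ideal.Quotient.mk (Ideal.span {1 - cc i})) := by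
  constructor
  · rw [injective_iff_map_eq_zero]
    intro r hr
    have hmem : ∀ i, r ∈ Ideal.span {1 - cc i} := by
      intro i
      have := congrFun hr i
      exact Ideal.Quotient.eq_zero_iff_mem.1 this
    have hz : ∀ i, r * cc i = 0 := by
      intro i
      obtain ⟨s, hs⟩ := Ideal.mem_span_singleton'.1 (hmem i)
      rw [← hs, show s * (1 - cc i) * cc i = s * (cc i - cc i * cc i) by ring, (hid i).eq,
        sub_self, mul_zero]
    calc r = r * ∑ i, cc i := by rw [hsum, mul_one]
    _ = ∑ i, r * cc i := Finset.mul_sum _ _ _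
    _ = 0 := by simp [hz]
  · intro x
    have hlift : ∀ i, ∃ r, Ideal.Quotient.mk (Ideal.span {1 - cc i}) r = x i := fun i =>
      Ideal.Quotient.mk_surjective (x i)
    choose rs hrs using hlift
    refine ⟨∑ i, cc i * rs i, ?_⟩
    funext i
    show Ideal.Quotient.mk (Ideal.span {1 - cc i}) (∑ j, cc j * rs j) = x i
    rw [map_sum]
    rw [Finset.sum_eq_single i]
    · rw [map_mul, show (Ideal.Quotient.mk (Ideal.span {1 - cc i})) (cc i) = 1 from ?_, one_mul,
        hrs]
      rw [← map_one (Ideal.Quotient.mk (Ideal.span {1 - cc i})), Ideal.Quotient.eq,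
        show cc i - 1 = -(1 - cc i) by ring]
      exact neg_mem (Ideal.subset_span rfl)
    · intro j _ hj
      rw [map_mul, show (Ideal.Quotient.mk (Ideal.span {1 - cc i})) (cc j) = 0 from ?_, zero_mul]
      rw [Ideal.Quotient.eq_zero_iff_mem]
      have : cc j = cc j * (1 - cc i) := by
        rw [mul_sub, mul_one, horth j i (Ne.symm (by exact fun h => hj h.symm)), sub_zero]
      rw [this]
      exact Ideal.mul_mem_left _ _ (Ideal.subset_span rfl)
    · intro h; exact absurd (Finset.mem_univ i) h

end RingLemmas

section Fan

variable {N : ℕ} (cc : Fin N → R)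

/-- The discrete diagram of quotients `R ⧸ (1 - cᵢ)`. -/
def fanK : Discrete (Fin N) ⥤ Under (CommRingCat.of R) :=
  Discrete.functor fun i => toQuot (1 - cc i)

/-- The fan on `R` itself given by the quotient maps. -/
def fanCone : Cone (fanK cc) where
  pt := Under.mk (𝟙 (CommRingCat.of R))
  π := Discrete.natTrans fun i => fromR0 _

theorem fan_leg (i : Fin N) : (fanCone cc).π.app ⟨i⟩ = fromR0 (toQuot (1 - cc i)) := rfl

/-- If the `cᵢ` form a complete orthogonal family of idempotents, the fan is a limit. -/
noncomputable def fanIsLimit (hid : ∀ i, IsIdempotentElem (cc i))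
    (horth : ∀ i j, i ≠ j → cc i * cc j = 0) (hsum : ∑ i, cc i = 1) :
    IsLimit (fanCone cc) := by
  have hbij := phi_bijective cc hid horth hsum
  let E := RingEquiv.ofBijective _ hbij
  refine
    { lift := fun s =>
        Under.homMk (CommRingCat.ofHom
          (E.symm.toRingHom.comp (Pi.ringHom fun i => (s.π.app ⟨i⟩).right.hom))) ?_
      fac := ?_
      uniq := ?_ }
  · apply CommRingCat.hom_ext
    apply RingHom.ext
    intro z
    show E.symm (Pi.ringHom (fun i => (s.π.app ⟨i⟩).right.hom) (s.pt.hom z)) = z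
    apply E.injective
    rw [E.apply_symm_apply]
    funext i
    have hw := Under.w (s.π.app (⟨i⟩ : Discrete (Fin N)))
    exact congrArg (fun f => CommRingCat.Hom.hom f z) hw
  · rintro s ⟨i⟩
    apply Under.UnderMorphism.ext
    apply CommRingCat.hom_ext
    apply RingHom.ext
    intro z
    show (Ideal.Quotient.mk (Ideal.span {1 - cc i}))
        (E.symm (Pi.ringHom (fun j => (s.π.app ⟨j⟩).right.hom) z)) = (s.π.app ⟨i⟩).right z
    exact congrFun (E.apply_symm_apply (Pi.ringHom (fun j => (s.π.app ⟨j⟩).right.hom) z)) i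
  · intro s mm hm
    apply Under.UnderMorphism.ext
    apply CommRingCat.hom_ext
    apply RingHom.ext
    intro z
    show mm.right z = E.symm (Pi.ringHom (fun j => (s.π.app ⟨j⟩).right.hom) z)
    apply E.injective
    rw [E.apply_symm_apply]
    funext i
    have := DFunLike.congr_fun (congrArg (fun (f : _ ⟶ _) => CommRingCat.Hom.hom (CommaMorphism.right f))
      (hm ⟨i⟩)) z
    exact this

end Fan

end Statement17


theorem trivial_of_trivial_on_connected_components
    (R : Type u) [CommRing R]
    (F : Under (CommRingCat.of R) ⥤ Pointed.{u})
    [Limits.PreservesFilteredColimits F] [Limits.PreservesFiniteProducts F]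
    (hcomp : ∀ p : PrimeSpectrum R,
      Subsingleton ((F.obj (Under.mk (CommRingCat.ofHom
        (Ideal.Quotient.mk (componentIdeal R p))))).X)) :
    Subsingleton ((F.obj (Under.mk (𝟙 (CommRingCat.of R)))).X) := by
  constructor
  intro x y
  -- Step 1: for each point, find an idempotent stage where `x` and `y` agree
  have stage : ∀ p : PrimeSpectrum R, ∃ e : R,
      (IsIdempotentElem e ∧ ∀ q ∈ connectedComponent p, e ∈ PrimeSpectrum.asIdeal q) ∧
      (F.map (Statement17.fromR0 (Statement17.toQuot e))).toFun x
        = (F.map (Statement17.fromR0 (Statement17.toQuot e))).toFun y := by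
    intro p
    have hc : Limits.IsColimit (F.mapCocone (Statement17.compCocone p)) :=
      Limits.isColimitOfPreserves F (Statement17.compIsColimit p)
    obtain ⟨j₀⟩ := (inferInstance : Nonempty (Statement17.IdemVan p))
    have key : ∀ z : (F.obj (Under.mk (𝟙 (CommRingCat.of R)))).X,
        ((F.mapCocone (Statement17.compCocone p)).ι.app j₀).toFun
          ((F.map (Statement17.fromR0 ((Statement17.diag p).obj j₀))).toFun z)
        = (F.map (Statement17.fromR0 (Statement17.compCocone p).pt)).toFun z := by
      intro z
      have h1 : Statement17.fromR0 ((Statement17.diag p).obj j₀) ≫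
          (Statement17.compCocone p).ι.app j₀
            = Statement17.fromR0 (Statement17.compCocone p).pt :=
        Statement17.fromR0_eq _
      rw [← h1, F.map_comp]
      rfl
    have hxy : ((F.mapCocone (Statement17.compCocone p)).ι.app j₀).toFun
          ((F.map (Statement17.fromR0 ((Statement17.diag p).obj j₀))).toFun x)
        = ((F.mapCocone (Statement17.compCocone p)).ι.app j₀).toFun
          ((F.map (Statement17.fromR0 ((Statement17.diag p).obj j₀))).toFun y) := by
      rw [key x, key y]
      exact (hcomp p).elim _ _
    obtain ⟨k, f, hk⟩ :=
      Statement17.pointed_filtered_stage (Statement17.diag p ⋙ F) hc _ _ hxy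
    refine ⟨k.1, k.2, ?_⟩
    have h2 : ∀ z : (F.obj (Under.mk (𝟙 (CommRingCat.of R)))).X,
        ((Statement17.diag p ⋙ F).map f).toFun
          ((F.map (Statement17.fromR0 ((Statement17.diag p).obj j₀))).toFun z)
        = (F.map (Statement17.fromR0 ((Statement17.diag p).obj k))).toFun z := by
      intro z
      have h1 : Statement17.fromR0 ((Statement17.diag p).obj j₀) ≫ (Statement17.diag p).map f
          = Statement17.fromR0 ((Statement17.diag p).obj k) := Statement17.fromR0_eq _
      rw [← h1, F.map_comp]
      rfl
    rw [h2 x, h2 y] at hk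
    exact hk
  choose ep hprop hF using stage
  -- Step 2: compactness gives a finite list of idempotents
  have hcover : (Set.univ : Set (PrimeSpectrum R)) ⊆
      ⋃ p : PrimeSpectrum R, (PrimeSpectrum.basicOpen (1 - ep p) : Set (PrimeSpectrum R)) := by
    intro q _
    refine Set.mem_iUnion.2 ⟨q, ?_⟩
    have hq : ep q ∈ q.asIdeal := (hprop q).2 q mem_connectedComponent
    show q ∈ PrimeSpectrum.basicOpen (1 - ep q)
    rw [PrimeSpectrum.mem_basicOpen]
    intro hmem
    have h1 : (1 : R) ∈ q.asIdeal := by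
      have := q.asIdeal.add_mem hmem hq
      simpa using this
    exact q.isPrime.ne_top (q.asIdeal.eq_top_iff_one.2 h1)
  obtain ⟨t, ht⟩ := isCompact_univ.elim_finite_subcover
    (fun p : PrimeSpectrum R => (PrimeSpectrum.basicOpen (1 - ep p) : Set (PrimeSpectrum R)))
    (fun p => (PrimeSpectrum.basicOpen (1 - ep p)).isOpen) hcover
  set l : List R := t.toList.map ep with hldef
  have hlidem : ∀ e ∈ l, IsIdempotentElem e := by
    intro e he
    obtain ⟨p, _, rfl⟩ := List.mem_map.1 he
    exact (hprop p).1
  have hlF : ∀ e ∈ l, (F.map (Statement17.fromR0 (Statement17.toQuot e))).toFun x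
      = (F.map (Statement17.fromR0 (Statement17.toQuot e))).toFun y := by
    intro e he
    obtain ⟨p, _, rfl⟩ := List.mem_map.1 he
    exact hF p
  have hlcover : ∀ q : PrimeSpectrum R, ∃ e ∈ l, e ∈ q.asIdeal := by
    intro q
    have hmem := ht (Set.mem_univ q)
    rw [Set.mem_iUnion₂] at hmem
    obtain ⟨p, hp, hq⟩ := hmem
    refine ⟨ep p, List.mem_map.2 ⟨p, Finset.mem_toList.2 hp, rfl⟩, ?_⟩
    have hq' : (1 : R) - ep p ∉ q.asIdeal := (PrimeSpectrum.mem_basicOpen _ _).1 hq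
    have h0 : ep p * (1 - ep p) ∈ q.asIdeal := by
      rw [show ep p * (1 - ep p) = ep p - ep p * ep p by ring, (hprop p).1.eq, sub_self]
      exact zero_mem _
    rcases q.isPrime.mem_or_mem h0 with h | h
    · exact h
    · exact absurd h hq'
  have hprod : l.prod = 0 := by
    refine Statement17.idem_eq_zero_of_nilpotent (Statement17.prod_idem l hlidem) ?_
    rw [← mem_nilradical, nilradical_eq_sInf, Submodule.mem_sInf]
    intro J hJ
    obtain ⟨e, hel, heJ⟩ := hlcover ⟨J, hJ⟩
    obtain ⟨c, hc⟩ := List.dvd_prod hel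
    rw [hc]
    exact Ideal.mul_mem_right _ _ heJ
  -- Step 3: refine to a complete orthogonal family of idempotents
  set m := Statement17.pairs l with hmdef
  let cc : Fin m.length → R := fun i => (m.get i).2
  have hget : ∀ i : Fin m.length, m.get i ∈ m := fun i => List.get_mem m i
  have hccidem : ∀ i, IsIdempotentElem (cc i) := fun i =>
    Statement17.pairs_snd_idem l hlidem _ (hget i)
  have horth : ∀ i j, i ≠ j → cc i * cc j = 0 := by
    intro i j hij
    have hpw := Statement17.pairs_orth l hlidem
    rw [List.pairwise_iff_getElem] at hpw
    rcases lt_or_gt_of_ne hij with h | h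
    · have h1 := hpw i.1 j.1 i.2 j.2 h
      simpa [cc, List.get_eq_getElem] using h1
    · have h1 := hpw j.1 i.1 j.2 i.2 h
      have h2 : cc j * cc i = 0 := by simpa [cc, List.get_eq_getElem] using h1
      rw [mul_comm] at h2
      exact h2
  have hsum : ∑ i, cc i = 1 := by
    have h1 : ∑ i : Fin m.length, (m.get i).2 = (m.map Prod.snd).sum := by
      simpa [List.get_eq_getElem] using Fin.sum_univ_get' m Prod.snd
    rw [show (∑ i, cc i) = ∑ i : Fin m.length, (m.get i).2 from rfl, h1,
      Statement17.pairs_sum_snd l, hprod, sub_zero]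
  -- Step 4: transfer the stage equalities to the orthogonal family
  have hAx : ∀ i : Fin m.length,
      (F.map (Statement17.fromR0 (Statement17.toQuot (1 - cc i)))).toFun x
      = (F.map (Statement17.fromR0 (Statement17.toQuot (1 - cc i)))).toFun y := by
    intro i
    have hg0 : (m.get i).1 * cc i = 0 :=
      Statement17.pairs_mul_eq_zero l hlidem _ (hget i)
    have hgl : (m.get i).1 ∈ l := Statement17.pairs_fst_mem l _ (hget i)
    have hle : Ideal.span {(m.get i).1} ≤ Ideal.span {1 - cc i} := by
      rw [Ideal.span_le]
      rintro a rfl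
      refine Ideal.mem_span_singleton.2 ⟨(m.get i).1, ?_⟩
      rw [sub_mul, one_mul, mul_comm (cc i) ((m.get i).1), hg0, sub_zero]
    let w : Statement17.toQuot (m.get i).1 ⟶ Statement17.toQuot (1 - cc i) :=
      Under.homMk (CommRingCat.ofHom (Ideal.Quotient.factor hle))
        (by apply CommRingCat.hom_ext; apply RingHom.ext; intro a; rfl)
    have h1 : Statement17.fromR0 (Statement17.toQuot (m.get i).1) ≫ w
        = Statement17.fromR0 (Statement17.toQuot (1 - cc i)) := Statement17.fromR0_eq _
    rw [← h1, F.map_comp]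
    simp only [Pointed.Hom.comp_toFun', Function.comp_apply]
    rw [hlF _ hgl]
  -- Step 5: conclude using preservation of finite products
  have hlim := Statement17.fanIsLimit cc hccidem horth hsum
  have hFl := Limits.isLimitOfPreserves F hlim
  exact Statement17.pointed_prod_inj _ hFl x y hAx
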